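/- Let f_{r₁}(z) = z^{n+1} − z^{n−1} v_n − z^{n−2} v_{n−1} − ⋯ − z v₂ − v₁ with v_j ∈ ℍ. Then every zero z of f_{r₁} satisfies |z| ≤ (1 + 2 Σ_{j=1}^{n} |v_j|²)^{1/4}. -/

import Mathlib

open scoped Quaternion
open Finset Matrix

noncomputable def specNorm {n : ℕ} (A : Matrix (Fin n) (Fin n) ℍ[ℝ]) : ℝ :=
  sSup {r : ℝ | ∃ x : Fin n → ℍ[ℝ], x ≠ 0 ∧
    r = Real.sqrt (∑ i, ‖A.mulVec x i‖ ^ 2) / Real.sqrt (∑ i, ‖x i‖ ^ 2)}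

theorem bound_thm3 (n : ℕ) (hn : 2 ≤ n) (v : ℕ → ℍ[ℝ]) (z : ℍ[ℝ])
    (hz : z ^ (n + 1) - ∑ j ∈ Finset.Icc 1 n, z ^ (j - 1) * v j = 0) :
    ‖z‖ ≤ (1 + 2 * ∑ j ∈ Finset.Icc 1 n, ‖v j‖ ^ 2) ^ ((1 : ℝ) / 4) := by
  set r := ‖z‖ with hr
  set S := ∑ j ∈ Finset.Icc 1 n, ‖v j‖ ^ 2 with hS
  have hS0 : 0 ≤ S := Finset.sum_nonneg fun j _ => sq_nonneg _
  have hr0 : 0 ≤ r := norm_nonneg z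
  have hkey : r ^ 4 ≤ 1 + 2 * S := by
    rcases le_or_gt r 1 with h1 | h1
    · nlinarith [pow_le_one₀ hr0 h1 (n:=4)]
    · have hzn : z ^ (n + 1) = ∑ j ∈ Finset.Icc 1 n, z ^ (j - 1) * v j := by
        rwa [sub_eq_zero] at hz
      have h2 : r ^ (n + 1) ≤ ∑ j ∈ Finset.Icc 1 n, r ^ (j - 1) * ‖v j‖ := by
        calc r ^ (n + 1) = ‖z ^ (n + 1)‖ := (norm_pow z (n + 1)).symm
          _ = ‖∑ j ∈ Finset.Icc 1 n, z ^ (j - 1) * v j‖ := by rw [hzn]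
          _ ≤ ∑ j ∈ Finset.Icc 1 n, ‖z ^ (j - 1) * v j‖ := norm_sum_le _ _
          _ = ∑ j ∈ Finset.Icc 1 n, r ^ (j - 1) * ‖v j‖ := by
              simp [norm_mul, norm_pow, hr]
      have h3 : (∑ j ∈ Finset.Icc 1 n, r ^ (j - 1) * ‖v j‖) ^ 2 ≤
          (∑ j ∈ Finset.Icc 1 n, (r ^ (j - 1)) ^ 2) * S :=
        Finset.sum_mul_sq_le_sq_mul_sq _ _ _
      set G := ∑ j ∈ Finset.Icc 1 n, (r ^ (j - 1)) ^ 2 with hG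
      have hGeq : G = ∑ i ∈ Finset.range n, (r ^ 2) ^ i := by
        rw [hG, ← Finset.Ico_add_one_right_eq_Icc, Finset.sum_Ico_eq_sum_range]
        simp [← pow_mul, Nat.mul_comm]
      have hgeom : G * (r ^ 2 - 1) = (r ^ 2) ^ n - 1 := by
        rw [hGeq, geom_sum_mul]
      have hr2 : (1 : ℝ) < r ^ 2 := by nlinarith
      have hpow : (0 : ℝ) < (r ^ 2) ^ n := pow_pos (by linarith) n
      have hG0 : 0 ≤ G := Finset.sum_nonneg fun j _ => sq_nonneg _
      have h5 : (r ^ (n + 1)) ^ 2 ≤ G * S := by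
        calc (r ^ (n + 1)) ^ 2 ≤ (∑ j ∈ Finset.Icc 1 n, r ^ (j - 1) * ‖v j‖) ^ 2 :=
              pow_le_pow_left₀ (pow_nonneg hr0 _) h2 2
          _ ≤ G * S := h3
      have hexp : (r ^ (n + 1)) ^ 2 = (r ^ 2) ^ n * r ^ 2 := by
        rw [← pow_mul, ← pow_mul, ← pow_add]
        congr 1
        ring
      have h6 : (r ^ 2) ^ n * r ^ 2 * (r ^ 2 - 1) ≤ (r ^ 2) ^ n * S := by
        have := mul_le_mul_of_nonneg_right h5 (le_of_lt (by linarith : (0:ℝ) < r ^ 2 - 1))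
        rw [hexp] at this
        calc (r ^ 2) ^ n * r ^ 2 * (r ^ 2 - 1) ≤ G * S * (r ^ 2 - 1) := this
          _ = G * (r ^ 2 - 1) * S := by ring
          _ = ((r ^ 2) ^ n - 1) * S := by rw [hgeom]
          _ ≤ (r ^ 2) ^ n * S := by nlinarith
      have h7 : r ^ 2 * (r ^ 2 - 1) ≤ S :=
        le_of_mul_le_mul_left (by linarith [h6] <;> nlinarith) hpow
      nlinarith [sq_nonneg (r ^ 2 - 1)]
  have h8 : r = ((r ^ 4 : ℝ)) ^ ((1 : ℝ) / 4) := by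
    rw [← Real.rpow_natCast r 4, ← Real.rpow_mul hr0]
    norm_num
  rw [h8]
  exact Real.rpow_le_rpow (pow_nonneg hr0 4) hkey (by norm_num)
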